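/- For every t ∈ [0,1], the asymptotic proportion of elements {n/i} (1 ≤ i ≤ n) falling in [0, t] satisfies lim_{n→∞} (1/n)·#{i ∈ ℕ : 1 ≤ i ≤ n and {n/i} ≤ t} = Σ_{m=1}^∞ (1/m − 1/(m+t)). -/

import Mathlib

open Filter Topology

private noncomputable def Bset (t : ℝ) (n m : ℕ) : Finset ℕ :=
  (Finset.Icc 1 n).filter fun i : ℕ => (m:ℝ) ≤ (n:ℝ)/i ∧ (n:ℝ)/i ≤ m + t

private noncomputable def Fset (t : ℝ) (n : ℕ) : Finset ℕ :=
  (Finset.Icc 1 n).filter fun i : ℕ => Int.fract ((n : ℝ) / i) ≤ t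
lemma B_eq (t : ℝ) (ht0 : 0 ≤ t) (n m : ℕ) (hn : 1 ≤ n) (hm : 1 ≤ m) :
    ((Finset.Icc 1 n).filter fun i : ℕ => (m:ℝ) ≤ (n:ℝ)/i ∧ (n:ℝ)/i ≤ m + t)
      = Finset.Icc ⌈(n:ℝ)/(m+t)⌉₊ (n / m) := by
  have hmt : (0:ℝ) < (m:ℝ) + t := by
    have : (1:ℝ) ≤ (m:ℝ) := by exact_mod_cast hm
    linarith
  ext i
  simp only [Finset.mem_filter, Finset.mem_Icc]
  constructor
  · rintro ⟨⟨hi1, hin⟩, hlo, hhi⟩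
    have hi0 : (0:ℝ) < (i:ℝ) := by exact_mod_cast hi1
    constructor
    · rw [Nat.ceil_le, div_le_iff₀ hmt]
      rw [div_le_iff₀ hi0] at hhi
      nlinarith
    · rw [Nat.le_div_iff_mul_le hm]
      rw [le_div_iff₀ hi0] at hlo
      exact_mod_cast (by push_cast; nlinarith : ((i*m : ℕ) : ℝ) ≤ (n:ℝ))
  · rintro ⟨ha, hb⟩
    have hi1 : 1 ≤ i := by
      refine le_trans ?_ ha
      rw [Nat.one_le_ceil_iff]
      positivity
    have hi0 : (0:ℝ) < (i:ℝ) := by exact_mod_cast hi1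
    have hmul : i * m ≤ n := (Nat.le_div_iff_mul_le hm).mp hb
    have hin : i ≤ n := le_trans (Nat.le_mul_of_pos_right i hm) hmul
    have hceil : (n:ℝ)/((m:ℝ)+t) ≤ i := le_trans (Nat.le_ceil _) (by exact_mod_cast ha)
    refine ⟨⟨hi1, hin⟩, ?_, ?_⟩
    · rw [le_div_iff₀ hi0]
      calc (m:ℝ) * i = ((i*m : ℕ):ℝ) := by push_cast; ring
        _ ≤ n := by exact_mod_cast hmul
    · rw [div_le_iff₀ hi0]
      rw [div_le_iff₀ hmt] at hceil
      nlinarith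
lemma card_bounds (t : ℝ) (ht0 : 0 ≤ t) (n m : ℕ) (hn : 1 ≤ n) (hm : 1 ≤ m) :
    (n:ℝ)/m - (n:ℝ)/((m:ℝ)+t) - 1 ≤ ((Finset.Icc ⌈(n:ℝ)/((m:ℝ)+t)⌉₊ (n / m)).card : ℝ) ∧
    ((Finset.Icc ⌈(n:ℝ)/((m:ℝ)+t)⌉₊ (n / m)).card : ℝ) ≤ (n:ℝ)/m - (n:ℝ)/((m:ℝ)+t) + 1 := by
  have hm0 : (0:ℝ) < (m:ℝ) := by exact_mod_cast hm
  have hmt : (0:ℝ) < (m:ℝ) + t := by linarith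
  set a := ⌈(n:ℝ)/((m:ℝ)+t)⌉₊ with ha
  set b := n / m with hb
  have ha1 : (n:ℝ)/((m:ℝ)+t) ≤ (a:ℝ) := Nat.le_ceil _
  have ha2 : (a:ℝ) < (n:ℝ)/((m:ℝ)+t) + 1 := Nat.ceil_lt_add_one (by positivity)
  have hbfloor : (b:ℕ) = ⌊(n:ℝ)/(m:ℝ)⌋₊ := by
    rw [hb, Nat.floor_div_natCast (n:ℝ) m, Nat.floor_natCast]
  have hb1 : (b:ℝ) ≤ (n:ℝ)/m := by rw [hbfloor]; exact Nat.floor_le (by positivity)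
  have hb2 : (n:ℝ)/m < (b:ℝ) + 1 := by rw [hbfloor]; exact Nat.lt_floor_add_one _
  have hdivle : (n:ℝ)/((m:ℝ)+t) ≤ (n:ℝ)/m :=
    div_le_div_of_nonneg_left (Nat.cast_nonneg n) hm0 (by linarith)
  rw [Nat.card_Icc]
  by_cases h : a ≤ b + 1
  · rw [Nat.cast_sub h]
    push_cast
    constructor <;> linarith
  · rw [Nat.sub_eq_zero_of_le (le_of_not_ge h)]
    push_cast
    have : (b:ℝ) + 1 < (a:ℝ) := by exact_mod_cast lt_of_not_ge h
    constructor <;> linarith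

lemma B_subset_F' (t : ℝ) (ht1 : t < 1) (n m : ℕ) (hm : 1 ≤ m) :
    Bset t n m ⊆ Fset t n := by
  intro i hi
  simp only [Bset, Fset, Finset.mem_filter, Finset.mem_Icc] at hi ⊢
  obtain ⟨⟨hi1, hin⟩, hlo, hhi⟩ := hi
  refine ⟨⟨hi1, hin⟩, ?_⟩
  have hfloor : ⌊(n:ℝ)/i⌋ = (m:ℤ) := by
    rw [Int.floor_eq_iff]
    constructor
    · exact_mod_cast hlo
    · push_cast; linarith
  rw [Int.fract, hfloor]
  push_cast
  linarith

lemma B_disjoint (t : ℝ) (ht1 : t < 1) (n m₁ m₂ : ℕ) (h : m₁ < m₂) :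
    Disjoint (Bset t n m₁) (Bset t n m₂) := by
  rw [Finset.disjoint_left]
  intro i h1 h2
  simp only [Bset, Finset.mem_filter, Finset.mem_Icc] at h1 h2
  have hc : ((m₁:ℝ)) + 1 ≤ (m₂:ℝ) := by exact_mod_cast h
  linarith [h1.2.2, h2.2.1]

lemma F_cover (t : ℝ) (ht0 : 0 ≤ t) (n M : ℕ) :
    Fset t n ⊆ ((Finset.range M).biUnion fun k => Bset t n (k+1)) ∪
      Finset.Icc 1 (n / (M+1)) := by
  intro i hi
  simp only [Fset, Finset.mem_filter, Finset.mem_Icc] at hi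
  obtain ⟨⟨hi1, hin⟩, hfr⟩ := hi
  have hi0 : (0:ℝ) < (i:ℝ) := by exact_mod_cast hi1
  have hx1 : (1:ℝ) ≤ (n:ℝ)/i := by
    rw [le_div_iff₀ hi0]; exact_mod_cast by linarith [hin]
  set x := (n:ℝ)/i with hx
  have hx0 : (0:ℝ) ≤ x := by linarith
  set m := ⌊x⌋₊ with hm
  have hm1 : 1 ≤ m := Nat.le_floor (by exact_mod_cast hx1)
  have hmx : (m:ℝ) ≤ x := Nat.floor_le hx0
  have hxm : x ≤ (m:ℝ) + t := by
    have : Int.fract x = x - (m:ℝ) := by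
      rw [Int.fract]
      congr 1
      exact_mod_cast (Int.natCast_floor_eq_floor hx0).symm
    rw [this] at hfr
    linarith
  rcases le_or_gt m M with hcase | hcase
  · apply Finset.mem_union_left
    rw [Finset.mem_biUnion]
    refine ⟨m - 1, Finset.mem_range.mpr (by omega), ?_⟩
    have : m - 1 + 1 = m := by omega
    rw [this]
    simp only [Bset, Finset.mem_filter, Finset.mem_Icc]
    exact ⟨⟨hi1, hin⟩, hmx, hxm⟩
  · apply Finset.mem_union_right
    rw [Finset.mem_Icc]
    refine ⟨hi1, ?_⟩
    rw [Nat.le_div_iff_mul_le (Nat.succ_pos M)]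
    have h1 : ((M:ℝ)+1) ≤ x := by
      have : ((M:ℝ)+1) ≤ (m:ℝ) := by exact_mod_cast hcase
      linarith
    rw [hx, le_div_iff₀ hi0] at h1
    exact_mod_cast (by push_cast; nlinarith : ((i * (M+1) : ℕ) : ℝ) ≤ (n:ℝ))

lemma cardB_lb (t : ℝ) (ht0 : 0 ≤ t) (n k : ℕ) (hn : 1 ≤ n) :
    (n:ℝ)/(k+1) - (n:ℝ)/(((k:ℝ)+1)+t) - 1 ≤ ((Bset t n (k+1)).card : ℝ) := by
  have hB : Bset t n (k+1) = Finset.Icc ⌈(n:ℝ)/(((k+1:ℕ):ℝ)+t)⌉₊ (n / (k+1)) :=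
    B_eq t ht0 n (k+1) hn (Nat.le_add_left 1 k)
  have h := (card_bounds t ht0 n (k+1) hn (Nat.le_add_left 1 k)).1
  rw [hB]
  push_cast at h ⊢
  linarith

lemma cardB_ub (t : ℝ) (ht0 : 0 ≤ t) (n k : ℕ) (hn : 1 ≤ n) :
    ((Bset t n (k+1)).card : ℝ) ≤ (n:ℝ)/(k+1) - (n:ℝ)/(((k:ℝ)+1)+t) + 1 := by
  have hB : Bset t n (k+1) = Finset.Icc ⌈(n:ℝ)/(((k+1:ℕ):ℝ)+t)⌉₊ (n / (k+1)) :=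
    B_eq t ht0 n (k+1) hn (Nat.le_add_left 1 k)
  have h := (card_bounds t ht0 n (k+1) hn (Nat.le_add_left 1 k)).2
  rw [hB]
  push_cast at h ⊢
  linarith

lemma hdisj (t : ℝ) (ht1 : t < 1) (n M : ℕ) :
    ∀ k₁ ∈ Finset.range M, ∀ k₂ ∈ Finset.range M, k₁ ≠ k₂ →
      Disjoint (Bset t n (k₁+1)) (Bset t n (k₂+1)) := by
  intro k₁ _ k₂ _ hne
  rcases lt_or_gt_of_ne hne with h | h
  · exact B_disjoint t ht1 n _ _ (by omega)
  · exact (B_disjoint t ht1 n _ _ (by omega)).symm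

lemma count_lower (t : ℝ) (ht0 : 0 ≤ t) (ht1 : t < 1) (n M : ℕ) (hn : 1 ≤ n) :
    ∑ k ∈ Finset.range M, ((n:ℝ)/(k+1) - (n:ℝ)/(((k:ℝ)+1)+t) - 1) ≤ ((Fset t n).card : ℝ) := by
  calc ∑ k ∈ Finset.range M, ((n:ℝ)/(k+1) - (n:ℝ)/(((k:ℝ)+1)+t) - 1)
      ≤ ∑ k ∈ Finset.range M, ((Bset t n (k+1)).card : ℝ) :=
        Finset.sum_le_sum fun k _ => cardB_lb t ht0 n k hn
    _ = ((∑ k ∈ Finset.range M, (Bset t n (k+1)).card : ℕ) : ℝ) := by push_cast; rfl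
    _ = ((((Finset.range M).biUnion fun k => Bset t n (k+1)).card : ℕ) : ℝ) := by
        rw [Finset.card_biUnion (hdisj t ht1 n M)]
    _ ≤ ((Fset t n).card : ℝ) := by
        have hsub : ((Finset.range M).biUnion fun k => Bset t n (k+1)) ⊆ Fset t n :=
          Finset.biUnion_subset.mpr fun k _ => B_subset_F' t ht1 n (k+1) (Nat.le_add_left 1 k)
        exact_mod_cast Finset.card_le_card hsub

lemma count_upper (t : ℝ) (ht0 : 0 ≤ t) (ht1 : t < 1) (n M : ℕ) (hn : 1 ≤ n) :
    ((Fset t n).card : ℝ) ≤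
      (∑ k ∈ Finset.range M, ((n:ℝ)/(k+1) - (n:ℝ)/(((k:ℝ)+1)+t) + 1)) + (n:ℝ)/(M+1) := by
  have h1 : (Fset t n).card ≤
      (((Finset.range M).biUnion fun k => Bset t n (k+1)) ∪ Finset.Icc 1 (n/(M+1))).card :=
    Finset.card_le_card (F_cover t ht0 n M)
  have h2 := Finset.card_union_le ((Finset.range M).biUnion fun k => Bset t n (k+1))
      (Finset.Icc 1 (n/(M+1)))
  have h3 := Finset.card_biUnion_le (s := Finset.range M) (t := fun k => Bset t n (k+1))
  have h4 : (Finset.Icc 1 (n/(M+1))).card = n/(M+1) := by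
    simp
  have h5 : ((n/(M+1) : ℕ) : ℝ) ≤ (n:ℝ)/((M:ℝ)+1) := by
    have := Nat.cast_div_le (α := ℝ) (m := n) (n := M+1)
    push_cast at this
    exact this
  have h6 : ∀ k ∈ Finset.range M, ((Bset t n (k+1)).card : ℝ)
      ≤ (n:ℝ)/(k+1) - (n:ℝ)/(((k:ℝ)+1)+t) + 1 := fun k _ => cardB_ub t ht0 n k hn
  calc ((Fset t n).card : ℝ)
      ≤ (((((Finset.range M).biUnion fun k => Bset t n (k+1)).card + (Finset.Icc 1 (n/(M+1))).card : ℕ)) : ℝ) := by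
        exact_mod_cast le_trans h1 h2
    _ ≤ ((∑ k ∈ Finset.range M, (Bset t n (k+1)).card : ℕ) : ℝ) + ((n/(M+1) : ℕ) : ℝ) := by
        rw [h4]; push_cast; exact_mod_cast Nat.add_le_add_right h3 _
    _ ≤ (∑ k ∈ Finset.range M, ((n:ℝ)/(k+1) - (n:ℝ)/(((k:ℝ)+1)+t) + 1)) + (n:ℝ)/(M+1) := by
        push_cast
        push_cast at h5
        have := Finset.sum_le_sum h6
        push_cast at this
        linarith
lemma aux_summable {t : ℝ} (ht0 : 0 ≤ t) (ht1 : t ≤ 1) :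
    Summable (fun m : ℕ => 1 / (m + 1 : ℝ) - 1 / ((m + 1 : ℝ) + t)) := by
  have hs : Summable (fun m : ℕ => 1 / ((m:ℝ) + 1) ^ 2) := by
    have := (summable_nat_add_iff (f := fun n : ℕ => 1 / (n:ℝ) ^ 2) 1).mpr
      (Real.summable_one_div_nat_pow.mpr one_lt_two)
    simpa using this
  refine Summable.of_nonneg_of_le (fun m => ?_) (fun m => ?_) hs
  · have h1 : (0:ℝ) < (m:ℝ) + 1 := by positivity
    have h2 : (0:ℝ) < (m:ℝ) + 1 + t := by linarith
    rw [sub_nonneg]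
    apply div_le_div_of_nonneg_left one_pos.le h1 <;> linarith
  · have h1 : (0:ℝ) < (m:ℝ) + 1 := by positivity
    have h2 : (0:ℝ) < (m:ℝ) + 1 + t := by linarith
    rw [div_sub_div _ _ h1.ne' h2.ne', div_le_div_iff₀ (by positivity) (by positivity)]
    ring_nf
    nlinarith [sq_nonneg ((m:ℝ)+1), mul_nonneg (mul_nonneg ht0 (Nat.cast_nonneg m)) (Nat.cast_nonneg m)]

/-- For `t ∈ [0,1]`, the asymptotic proportion of fractional parts `{n/i}`
(`1 ≤ i ≤ n`) lying in `[0, t]` equals `Σ_{m=1}^∞ (1/m − 1/(m+t))`. -/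
theorem proportion_fract_n_div_i_le (t : ℝ) (ht : t ∈ Set.Icc (0 : ℝ) 1) :
    Tendsto
      (fun n : ℕ =>
        (((Finset.Icc 1 n).filter fun i : ℕ => Int.fract ((n : ℝ) / i) ≤ t).card : ℝ) / n)
      atTop (𝓝 (∑' m : ℕ, (1 / (m + 1 : ℝ) - 1 / ((m + 1 : ℝ) + t)))) := by
  obtain ⟨ht0, ht1⟩ := ht
  set f : ℕ → ℝ := fun m => 1 / (m + 1 : ℝ) - 1 / ((m + 1 : ℝ) + t) with hf
  have hsum : Summable f := aux_summable ht0 ht1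
  show Tendsto (fun n : ℕ => ((Fset t n).card : ℝ) / n) atTop (𝓝 (∑' m, f m))
  rcases eq_or_lt_of_le ht1 with rfl | ht1'
  · -- t = 1
    have hps : Tendsto (fun M : ℕ => ∑ k ∈ Finset.range M, f k) atTop (𝓝 1) := by
      have hsum_eq : ∀ M : ℕ, ∑ k ∈ Finset.range M, f k = 1 - 1/((M:ℝ)+1) := by
        intro M
        rw [show (1:ℝ) - 1/((M:ℝ)+1)
            = (fun k : ℕ => 1/((k:ℝ)+1)) 0 - (fun k : ℕ => 1/((k:ℝ)+1)) M by norm_num,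
          ← Finset.sum_range_sub' (fun k : ℕ => 1/((k:ℝ)+1)) M]
        apply Finset.sum_congr rfl
        intro k _
        simp only [hf]
        push_cast
        ring
      simp only [hsum_eq]
      have h0 := tendsto_one_div_add_atTop_nhds_zero_nat (𝕜 := ℝ)
      have := (tendsto_const_nhds (x := (1:ℝ)) (f := atTop)).sub h0
      simpa using this
    have hfnn : ∀ m : ℕ, 0 ≤ f m := by
      intro m
      simp only [hf]
      rw [sub_nonneg]
      have h1 : (0:ℝ) < (m:ℝ) + 1 := by positivity
      apply div_le_div_of_nonneg_left one_pos.le h1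
      linarith
    have htsum : ∑' m, f m = 1 :=
      ((hasSum_iff_tendsto_nat_of_nonneg hfnn 1).mpr hps).tsum_eq
    rw [htsum]
    apply Tendsto.congr' (f₁ := fun _ : ℕ => (1:ℝ))
    · filter_upwards [eventually_ge_atTop 1] with n hn
      have hF : Fset 1 n = Finset.Icc 1 n := by
        rw [Fset, Finset.filter_true_of_mem]
        intro i _
        exact le_of_lt (Int.fract_lt_one _)
      rw [hF, Nat.card_Icc]
      have hn0 : (0:ℝ) < (n:ℝ) := by exact_mod_cast hn
      field_simp
      simp
    · exact tendsto_const_nhds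
  · -- t < 1
    rw [Metric.tendsto_atTop]
    intro ε hε
    set S := ∑' m, f m with hS
    have hps : Tendsto (fun M : ℕ => ∑ k ∈ Finset.range M, f k) atTop (𝓝 S) :=
      hsum.hasSum.tendsto_sum_nat
    have h1M : Tendsto (fun M : ℕ => 1/((M:ℝ)+1)) atTop (𝓝 0) :=
      tendsto_one_div_add_atTop_nhds_zero_nat
    rw [Metric.tendsto_atTop] at hps h1M
    obtain ⟨N₁, hN₁⟩ := hps (ε/4) (by linarith)
    obtain ⟨N₂, hN₂⟩ := h1M (ε/4) (by linarith)
    set M := max (max N₁ N₂) 1 with hMdef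
    have hM1 : |∑ k ∈ Finset.range M, f k - S| < ε/4 := by
      have := hN₁ M (le_trans (le_max_left _ _) (le_max_left _ _))
      rwa [Real.dist_eq] at this
    have hM2 : 1/((M:ℝ)+1) < ε/4 := by
      have := hN₂ M (le_trans (le_max_right _ _) (le_max_left _ _))
      rw [Real.dist_eq, sub_zero] at this
      exact lt_of_abs_lt this
    refine ⟨max 1 ⌈(M:ℝ)*4/ε⌉₊, fun n hn => ?_⟩
    have hn1 : 1 ≤ n := le_trans (le_max_left _ _) hn
    have hn0 : (0:ℝ) < (n:ℝ) := by exact_mod_cast hn1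
    have hMn : (M:ℝ)/n ≤ ε/4 := by
      have h := le_trans (le_max_right 1 ⌈(M:ℝ)*4/ε⌉₊) hn
      have h2 : (M:ℝ)*4/ε ≤ (n:ℝ) := by
        have := Nat.ceil_le.mp h
        exact_mod_cast this
      rw [div_le_div_iff₀ hn0 (by linarith : (0:ℝ) < 4)]
      rw [div_le_iff₀ hε] at h2
      linarith
    set SM := ∑ k ∈ Finset.range M, f k with hSM
    have hsum_eq : ∀ k : ℕ, (n:ℝ)/(k+1) - (n:ℝ)/(((k:ℝ)+1)+t) = (n:ℝ) * f k := by
      intro k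
      simp only [hf]
      rw [mul_sub, mul_one_div, mul_one_div]
    have hlow := count_lower t ht0 ht1' n M hn1
    have hup := count_upper t ht0 ht1' n M hn1
    have hsum_low : ∑ k ∈ Finset.range M, ((n:ℝ)/(k+1) - (n:ℝ)/(((k:ℝ)+1)+t) - 1)
        = (n:ℝ) * SM - M := by
      rw [Finset.sum_sub_distrib, Finset.sum_const, Finset.card_range]
      rw [hSM, Finset.mul_sum]
      simp only [hsum_eq]
      simp
    have hsum_up : ∑ k ∈ Finset.range M, ((n:ℝ)/(k+1) - (n:ℝ)/(((k:ℝ)+1)+t) + 1)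
        = (n:ℝ) * SM + M := by
      rw [Finset.sum_add_distrib, Finset.sum_const, Finset.card_range]
      rw [hSM, Finset.mul_sum]
      simp only [hsum_eq]
      simp
    rw [hsum_low] at hlow
    rw [hsum_up] at hup
    set c := ((Fset t n).card : ℝ) with hc
    have hA : SM - (M:ℝ)/n ≤ c/n := by
      rw [le_div_iff₀ hn0]
      have : (SM - (M:ℝ)/n) * n = (n:ℝ) * SM - M := by field_simp
      linarith [this ▸ hlow]
    have hB : c/n ≤ SM + (M:ℝ)/n + 1/((M:ℝ)+1) := by
      rw [div_le_iff₀ hn0]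
      have hdivn : (n:ℝ)/((M:ℝ)+1) = (1/((M:ℝ)+1)) * n := by field_simp
      have : (SM + (M:ℝ)/n + 1/((M:ℝ)+1)) * n = (n:ℝ) * SM + M + (n:ℝ)/((M:ℝ)+1) := by
        field_simp
      linarith [this ▸ hup]
    rw [Real.dist_eq, abs_lt]
    have habs := abs_lt.mp hM1
    constructor
    · -- -ε < c/n - S
      have : S - SM < ε/4 := by linarith [habs.2]
      linarith
    · have : SM - S < ε/4 := by linarith [habs.1]
      linarith
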